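/- The quantity G = 4(ω₁ν₁ + ω₂ν₂) + ω₃ν₃ is conserved along solutions of the Goryachev–Chaplygin equations ν̇ = ν × ω, 4ω̇₁ = 3ω₂ω₃, 4ω̇₂ = −3ω₁ω₃ − ν₃, ω̇₃ = ν₂; hence the set {G = 0} is invariant under the flow. -/

import Mathlib

/-- `G = 4(ω₁ν₁ + ω₂ν₂) + ω₃ν₃` is conserved along solutions of the
Goryachev–Chaplygin equations; hence `{G = 0}` is invariant under the flow. -/
theorem goryachev_chaplygin_area_integral_conserved
    (ν1 ν2 ν3 ω1 ω2 ω3 ν1' ν2' ν3' ω1' ω2' ω3' : ℝ → ℝ)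
    (hν1 : ∀ t, HasDerivAt ν1 (ν1' t) t)
    (hν2 : ∀ t, HasDerivAt ν2 (ν2' t) t)
    (hν3 : ∀ t, HasDerivAt ν3 (ν3' t) t)
    (hω1 : ∀ t, HasDerivAt ω1 (ω1' t) t)
    (hω2 : ∀ t, HasDerivAt ω2 (ω2' t) t)
    (hω3 : ∀ t, HasDerivAt ω3 (ω3' t) t)
    (e1 : ∀ t, ν1' t = ν2 t * ω3 t - ν3 t * ω2 t)
    (e2 : ∀ t, ν2' t = ν3 t * ω1 t - ν1 t * ω3 t)
    (e3 : ∀ t, ν3' t = ν1 t * ω2 t - ν2 t * ω1 t)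
    (e4 : ∀ t, 4 * ω1' t = 3 * ω2 t * ω3 t)
    (e5 : ∀ t, 4 * ω2' t = -(3 * ω1 t * ω3 t) - ν3 t)
    (e6 : ∀ t, ω3' t = ν2 t) :
    (∀ t, HasDerivAt
      (fun s => 4 * (ω1 s * ν1 s + ω2 s * ν2 s) + ω3 s * ν3 s) 0 t) ∧
    (4 * (ω1 0 * ν1 0 + ω2 0 * ν2 0) + ω3 0 * ν3 0 = 0 →
      ∀ t, 4 * (ω1 t * ν1 t + ω2 t * ν2 t) + ω3 t * ν3 t = 0) := by
  have key : ∀ t, HasDerivAt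
      (fun s => 4 * (ω1 s * ν1 s + ω2 s * ν2 s) + ω3 s * ν3 s) 0 t := by
    intro t
    have h := ((((hω1 t).mul (hν1 t)).add ((hω2 t).mul (hν2 t))).const_mul 4).add
      ((hω3 t).mul (hν3 t))
    refine h.congr_deriv ?_
    have h4 : ω1' t = 3 * ω2 t * ω3 t / 4 := by linarith [e4 t]
    have h5 : ω2' t = (-(3 * ω1 t * ω3 t) - ν3 t) / 4 := by linarith [e5 t]
    rw [e1 t, e2 t, e3 t, e6 t, h4, h5]; ring
  refine ⟨key, fun h0 t => ?_⟩
  have : ∀ s, (fun s => 4 * (ω1 s * ν1 s + ω2 s * ν2 s) + ω3 s * ν3 s) s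
      = (fun s => 4 * (ω1 s * ν1 s + ω2 s * ν2 s) + ω3 s * ν3 s) 0 := by
    intro s
    exact is_const_of_deriv_eq_zero (fun x => (key x).differentiableAt)
      (fun x => (key x).deriv) s 0
  simpa [h0] using this t
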